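/- Let C be a permutation-invariant partition of the player set of a finite normal-form game with identical interests. The ω-limit set of every solution of the joint CT-ECFP differential inclusion q̇ ∈ BR(q̄) − q is a connected subset of MCE along which the function V(p) = (1/n) ∑_{i=1}^n U(p_i, p̄_{-i}) is constant. -/

import Mathlib

open MeasureTheory Filter Topology

noncomputable section

namespace ECFP

variable {ι A κ : Type*}

/-- The mixed-strategy simplex over a finite action set `Y` inside the action universe `A`. -/
def simplex (Y : Finset A) : Set (A → ℝ) :=
  {p | (∀ a, 0 ≤ p a) ∧ (∀ a, a ∉ Y → p a = 0) ∧ ∑ a ∈ Y, p a = 1}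

/-- The space `Δⁿ` of joint mixed strategies. -/
def Delta (Y : ι → Finset A) : Set (ι → A → ℝ) :=
  {p | ∀ i, p i ∈ simplex (Y i)}

variable [Fintype ι] [DecidableEq ι] [Fintype A] [DecidableEq κ]

/-- The mixed extension of the common utility `u`:
`U(p₁,…,pₙ) = ∑_y u(y) p₁(y₁)⋯pₙ(yₙ)`. -/
def U (u : (ι → A) → ℝ) (p : ι → A → ℝ) : ℝ :=
  ∑ y : ι → A, u y * ∏ i, p i (y i)

/-- The `ε`-best-response set of player `i` against the joint strategy `p`
(only the components `p_{-i}` matter, since player `i`'s component is overwritten):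
`{pᵢ ∈ Δᵢ : U(pᵢ,p_{-i}) ≥ U(qᵢ,p_{-i}) - ε  ∀ qᵢ ∈ Δᵢ}`. -/
def BRi (Y : ι → Finset A) (u : (ι → A) → ℝ) (ε : ℝ) (p : ι → A → ℝ) (i : ι) :
    Set (A → ℝ) :=
  {pi | pi ∈ simplex (Y i) ∧
    ∀ qi ∈ simplex (Y i),
      U u (Function.update p i pi) ≥ U u (Function.update p i qi) - ε}

/-- The joint `ε`-best-response set `BR^ε(p) = (BR₁^ε(p_{-1}),…,BRₙ^ε(p_{-n}))`. -/
def BR (Y : ι → Finset A) (u : (ι → A) → ℝ) (ε : ℝ) (p : ι → A → ℝ) :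
    Set (ι → A → ℝ) :=
  {b | ∀ i, b i ∈ BRi Y u ε p i}

/-- The profile obtained from `y` by swapping the strategies of players `i` and `j`. -/
def swapStrat (y : ι → A) (i j : ι) : ι → A :=
  Function.update (Function.update y i (y j)) j (y i)

/-- `cls : ι → κ` encodes a permutation-invariant partition of the player set (the classes
are the fibers of `cls`): players in the same class have the same action set, and the utility
is invariant under swapping the strategies of two same-class players in any strategy profile. -/
def PermInvariant (Y : ι → Finset A) (u : (ι → A) → ℝ) (cls : ι → κ) : Prop :=
  ∀ i j : ι, cls i = cls j →
    Y i = Y j ∧ ∀ y : ι → A, (∀ k, y k ∈ Y k) → u (swapStrat y i j) = u y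

/-- The equivalence class (as a finset of players) of player `i`. -/
def cluster (cls : ι → κ) (i : ι) : Finset ι :=
  Finset.univ.filter (fun j => cls j = cls i)

/-- The centroid distribution `p̄`: player `i` is assigned the average of the strategies of
the players in `i`'s class. -/
def centroid (cls : ι → κ) (p : ι → A → ℝ) : ι → A → ℝ :=
  fun i => ((cluster cls i).card : ℝ)⁻¹ • ∑ j ∈ cluster cls i, p j

/-- A joint strategy is class-constant if same-class players use identical strategies. -/
def classConst (cls : ι → κ) (p : ι → A → ℝ) : Prop :=
  ∀ i j, cls i = cls j → p i = p j

/-- The set of Nash equilibria. -/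
def NE (Y : ι → Finset A) (u : (ι → A) → ℝ) : Set (ι → A → ℝ) :=
  {p | p ∈ Delta Y ∧ ∀ i, ∀ qi ∈ simplex (Y i),
    U u (Function.update p i qi) ≤ U u p}

/-- The set of symmetric Nash equilibria relative to the partition `cls`. -/
def SNE (Y : ι → Finset A) (u : (ι → A) → ℝ) (cls : ι → κ) : Set (ι → A → ℝ) :=
  {p | p ∈ NE Y u ∧ classConst cls p}

/-- The set of mean-centric equilibria relative to the partition `cls`:
`U(pᵢ, p̄_{-i}) ≥ U(pᵢ', p̄_{-i})` for all `pᵢ' ∈ Δᵢ` and all `i`. -/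
def MCE (Y : ι → Finset A) (u : (ι → A) → ℝ) (cls : ι → κ) : Set (ι → A → ℝ) :=
  {p | p ∈ Delta Y ∧ ∀ i, ∀ qi ∈ simplex (Y i),
    U u (Function.update (centroid cls p) i qi)
      ≤ U u (Function.update (centroid cls p) i (p i))}

/-- `V(p) = (1/n) ∑ᵢ U(pᵢ, p̄_{-i})`. -/
def Vfun (u : (ι → A) → ℝ) (cls : ι → κ) (p : ι → A → ℝ) : ℝ :=
  (Fintype.card ι : ℝ)⁻¹ * ∑ i, U u (Function.update (centroid cls p) i (p i))

/-- A discrete-time ECFP process w.r.t. `(Γ, 𝒞)`: `q(1) = a(1)`,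
`q(t+1) = q(t) + γₜ (a(t+1) − q(t))` and `a(t+1) ∈ BR^{εₜ}(q̄(t))` for all `t`
(time is indexed by `ℕ`, i.e. `t = 0` plays the role of `t = 1` in the paper). -/
structure IsECFP (Y : ι → Finset A) (u : (ι → A) → ℝ) (cls : ι → κ)
    (γ ε : ℕ → ℝ) (a q : ℕ → ι → A → ℝ) : Prop where
  a_init_mem : a 0 ∈ Delta Y
  q_mem : ∀ t, q t ∈ Delta Y
  init : q 0 = a 0
  step : ∀ t, q (t + 1) = q t + γ t • (a (t + 1) - q t)
  br : ∀ t, a (t + 1) ∈ BR Y u (ε t) (centroid cls (q t))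

/-- A solution of the differential inclusion `ẋ ∈ F(x)` taking values in `Δⁿ`:
an everywhere-`Δⁿ`-valued trajectory on `[0,∞)` which is the integral of a locally
integrable selection `g(t) ∈ F(x(t))` (a.e.). -/
def IsSolution (Y : ι → Finset A) (F : (ι → A → ℝ) → Set (ι → A → ℝ))
    (x : ℝ → ι → A → ℝ) : Prop :=
  (∀ t : ℝ, 0 ≤ t → x t ∈ Delta Y) ∧
  ∃ g : ℝ → ι → A → ℝ,
    LocallyIntegrableOn g (Set.Ici (0 : ℝ)) ∧
    (∀ᵐ t ∂(volume.restrict (Set.Ici (0 : ℝ))), g t ∈ F (x t)) ∧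
    ∀ t : ℝ, 0 ≤ t → x t = x 0 + ∫ s in Set.Ioc (0 : ℝ) t, g s

/-- Right-hand side of the joint CT-ECFP differential inclusion `q̇ ∈ BR(q̄) − q`. -/
def Fjoint (Y : ι → Finset A) (u : (ι → A) → ℝ) (cls : ι → κ)
    (q : ι → A → ℝ) : Set (ι → A → ℝ) :=
  (fun b => b - q) '' BR Y u 0 (centroid cls q)

/-- Right-hand side of the centroid CT-ECFP differential inclusion `ẏ ∈ BR(y) − y`. -/
def Fcent (Y : ι → Finset A) (u : (ι → A) → ℝ)
    (y : ι → A → ℝ) : Set (ι → A → ℝ) :=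
  (fun b => b - y) '' BR Y u 0 y

/-- The ω-limit set of a continuous-time trajectory: all limits of sequences
`x(t_k)` with `t_k → ∞`. -/
def omegaLimitSet (x : ℝ → ι → A → ℝ) : Set (ι → A → ℝ) :=
  {p | ∃ tk : ℕ → ℝ, Tendsto tk atTop atTop ∧ Tendsto (fun k => x (tk k)) atTop (𝓝 p)}

/-- The set of limit points of a (discrete-time) sequence. -/
def seqLimitPoints (q : ℕ → ι → A → ℝ) : Set (ι → A → ℝ) :=
  {p | ∃ φ : ℕ → ℕ, StrictMono φ ∧ Tendsto (fun k => q (φ k)) atTop (𝓝 p)}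

/-- A compact set `X ⊆ Δⁿ` is internally chain transitive for the inclusion `ẋ ∈ F(x)`:
any two points of `X` can be joined, for every `ε > 0` and `T > 0`, by finitely many
solution pieces of duration `> T` staying in `X`, with jumps of size `≤ ε`. -/
def InternallyChainTransitive (Y : ι → Finset A)
    (F : (ι → A → ℝ) → Set (ι → A → ℝ)) (X : Set (ι → A → ℝ)) : Prop :=
  IsCompact X ∧ X ⊆ Delta Y ∧
  ∀ ξ ∈ X, ∀ η ∈ X, ∀ ε : ℝ, 0 < ε → ∀ T : ℝ, 0 < T →
    ∃ k : ℕ, 0 < k ∧ ∃ x : ℕ → ℝ → ι → A → ℝ, ∃ tt : ℕ → ℝ,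
      (∀ i < k, IsSolution Y F (x i)) ∧
      (∀ i < k, T < tt i) ∧
      (∀ i < k, ∀ s : ℝ, 0 ≤ s → s ≤ tt i → x i s ∈ X) ∧
      (∀ i, i + 1 < k → ‖x i (tt i) - x (i + 1) 0‖ ≤ ε) ∧
      ‖x 0 0 - ξ‖ ≤ ε ∧ ‖x (k - 1) (tt (k - 1)) - η‖ ≤ ε

/-! ### Auxiliary lemmas -/

set_option linter.unusedSectionVars false

section AuxAlgebra

variable [DecidableEq A]
variable {Y : ι → Finset A} {u : (ι → A) → ℝ} {cls : ι → κ}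

lemma prod_update_apply (p : ι → A → ℝ) (i : ι) (v : A → ℝ) (y : ι → A) :
    ∏ j, Function.update p i v j (y j)
      = v (y i) * ∏ j ∈ Finset.univ.erase i, p j (y j) := by
  rw [← Finset.mul_prod_erase Finset.univ (fun j => Function.update p i v j (y j))
    (Finset.mem_univ i), Function.update_self]
  congr 1
  exact Finset.prod_congr rfl fun j hj => by
    rw [Function.update_of_ne (Finset.ne_of_mem_erase hj)]

lemma U_update (p : ι → A → ℝ) (i : ι) (v : A → ℝ) :
    U u (Function.update p i v)
      = ∑ y : ι → A, u y * (v (y i) * ∏ j ∈ Finset.univ.erase i, p j (y j)) :=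
  Finset.sum_congr rfl fun y _ => by rw [prod_update_apply]

lemma U_update_sum {β : Type*} (p : ι → A → ℝ) (i : ι) (s : Finset β) (v : β → A → ℝ) :
    U u (Function.update p i (∑ b ∈ s, v b))
      = ∑ b ∈ s, U u (Function.update p i (v b)) := by
  simp only [U_update, Finset.sum_apply, Finset.sum_mul, Finset.mul_sum]
  rw [Finset.sum_comm]

lemma U_update_smul (p : ι → A → ℝ) (i : ι) (c : ℝ) (v : A → ℝ) :
    U u (Function.update p i (c • v)) = c * U u (Function.update p i v) := by
  simp only [U_update, Pi.smul_apply, smul_eq_mul, Finset.mul_sum]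
  exact Finset.sum_congr rfl fun y _ => by ring

lemma U_update_sub (p : ι → A → ℝ) (i : ι) (v w : A → ℝ) :
    U u (Function.update p i (v - w))
      = U u (Function.update p i v) - U u (Function.update p i w) := by
  simp only [U_update, Pi.sub_apply, ← Finset.sum_sub_distrib]
  exact Finset.sum_congr rfl fun y _ => by ring

lemma single_mem_simplex {i : ι} {a : A} (ha : a ∈ Y i) :
    Pi.single a (1:ℝ) ∈ simplex (Y i) := by
  refine ⟨fun b => ?_, fun b hb => ?_, ?_⟩
  · rw [Pi.single_apply]
    split <;> norm_num
  · rw [Pi.single_apply, if_neg]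
    rintro rfl; exact hb ha
  · simp only [Pi.single_apply]
    rw [Finset.sum_ite_eq' (Y i) a (fun _ => (1:ℝ)), if_pos ha]

lemma simplex_eq_sum {i : ι} {q : A → ℝ} (hq : q ∈ simplex (Y i)) :
    q = ∑ a ∈ Y i, q a • (Pi.single a (1:ℝ) : A → ℝ) := by
  funext b
  rw [Finset.sum_apply]
  simp only [Pi.smul_apply, Pi.single_apply, smul_eq_mul, mul_ite, mul_one, mul_zero]
  rw [Finset.sum_ite_eq (Y i) b (fun a => q a)]
  split
  · rfl
  · next h => exact (hq.2.1 b h)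

/-- The best-response value of player `i` against `y₋ᵢ`. -/
def Mi (Y : ι → Finset A) (hY : ∀ i, (Y i).Nonempty) (u : (ι → A) → ℝ)
    (y : ι → A → ℝ) (i : ι) : ℝ :=
  (Y i).sup' (hY i) fun a => U u (Function.update y i (Pi.single a 1))

/-- The Lyapunov defect `Φ(y) = ∑ᵢ (maxᵢ U(·,y₋ᵢ) − U(y))`. -/
def Phi (Y : ι → Finset A) (hY : ∀ i, (Y i).Nonempty) (u : (ι → A) → ℝ)
    (y : ι → A → ℝ) : ℝ :=
  ∑ i, (Mi Y hY u y i - U u y)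

lemma U_update_le_Mi {hY : ∀ i, (Y i).Nonempty} {y : ι → A → ℝ} {i : ι} {q : A → ℝ}
    (hq : q ∈ simplex (Y i)) :
    U u (Function.update y i q) ≤ Mi Y hY u y i := by
  conv_lhs => rw [simplex_eq_sum hq]
  rw [U_update_sum]
  calc ∑ a ∈ Y i, U u (Function.update y i (q a • (Pi.single a (1:ℝ) : A → ℝ)))
      ≤ ∑ a ∈ Y i, q a * Mi Y hY u y i := by
        refine Finset.sum_le_sum fun a ha => ?_
        rw [U_update_smul]
        unfold Mi
        exact mul_le_mul_of_nonneg_left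
          (Finset.le_sup' (fun a => U u (Function.update y i (Pi.single a (1:ℝ)))) ha) (hq.1 a)
    _ = Mi Y hY u y i := by rw [← Finset.sum_mul, hq.2.2, one_mul]

lemma Phi_nonneg {hY : ∀ i, (Y i).Nonempty} {y : ι → A → ℝ} (hy : y ∈ Delta Y) :
    0 ≤ Phi Y hY u y := by
  refine Finset.sum_nonneg fun i _ => sub_nonneg.2 ?_
  have h := U_update_le_Mi (u := u) (hY := hY) (y := y) (hy i)
  rwa [Function.update_eq_self] at h

lemma single_le_Phi {hY : ∀ i, (Y i).Nonempty} {y : ι → A → ℝ} (hy : y ∈ Delta Y)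
    {i : ι} {a : A} (ha : a ∈ Y i) :
    U u (Function.update y i (Pi.single a 1)) - U u y ≤ Phi Y hY u y := by
  have h1 : U u (Function.update y i (Pi.single a 1)) - U u y ≤ Mi Y hY u y i - U u y := by
    have := Finset.le_sup' (fun a => U u (Function.update y i (Pi.single a (1:ℝ)))) ha
    exact sub_le_sub_right this _
  refine h1.trans (Finset.single_le_sum (f := fun k => Mi Y hY u y k - U u y) ?_ (Finset.mem_univ i))
  intro k _
  have h := U_update_le_Mi (u := u) (hY := hY) (y := y) (hy k)
  rw [Function.update_eq_self] at h
  linarith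

end AuxAlgebra
section AuxSwap

variable [DecidableEq A]
variable {Y : ι → Finset A} {u : (ι → A) → ℝ} {cls : ι → κ}

lemma swapStrat_involutive (i j : ι) :
    Function.Involutive (fun y : ι → A => swapStrat y i j) := by
  intro y
  rcases eq_or_ne i j with rfl | hne
  · funext k
    unfold swapStrat
    rcases eq_or_ne k i with rfl | hk
    · simp
    · simp [Function.update_of_ne hk]
  · funext k
    unfold swapStrat
    rcases eq_or_ne k j with rfl | hkj
    · simp [Function.update_of_ne hne]
    · rcases eq_or_ne k i with rfl | hki
      · simp [Function.update_of_ne hkj, Function.update_of_ne hne.symm]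
      · simp [Function.update_of_ne hkj, Function.update_of_ne hki]

lemma U_update_swap (hpi : PermInvariant Y u cls) {i j : ι} (hij : cls i = cls j)
    {p : ι → A → ℝ} (hp : p ∈ Delta Y) (hcc : p i = p j) {v : A → ℝ}
    (hv : ∀ a, a ∉ Y i → v a = 0) :
    U u (Function.update p i v) = U u (Function.update p j v) := by
  rcases eq_or_ne i j with rfl | hne
  · rfl
  have hYij : Y i = Y j := (hpi i j hij).1
  have hswap : ∀ z : ι → A, swapStrat z i j i = z j ∧ swapStrat z i j j = z i ∧
      ∀ k, k ≠ i → k ≠ j → swapStrat z i j k = z k := by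
    intro z
    refine ⟨?_, ?_, fun k hki hkj => ?_⟩
    · unfold swapStrat; rw [Function.update_of_ne hne, Function.update_self]
    · unfold swapStrat; rw [Function.update_self]
    · unfold swapStrat; rw [Function.update_of_ne hkj, Function.update_of_ne hki]
  unfold U
  rw [← Equiv.sum_comp ((swapStrat_involutive (A := A) i j).toPerm _)
    (fun y => u y * ∏ k, Function.update p i v k (y k))]
  refine Finset.sum_congr rfl fun z _ => ?_
  simp only [Function.Involutive.coe_toPerm]
  obtain ⟨hzi, hzj, hzo⟩ := hswap z
  have hj_mem : j ∈ Finset.univ.erase i := Finset.mem_erase.2 ⟨hne.symm, Finset.mem_univ j⟩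
  have hi_mem : i ∈ Finset.univ.erase j := Finset.mem_erase.2 ⟨hne, Finset.mem_univ i⟩
  have hP1 : ∏ k, Function.update p i v k (swapStrat z i j k)
      = v (z j) * (p j (z i) * ∏ k ∈ (Finset.univ.erase i).erase j, p k (z k)) := by
    rw [prod_update_apply, hzi, ← Finset.mul_prod_erase _ _ hj_mem, hzj]
    congr 2
    refine Finset.prod_congr rfl fun k hk => ?_
    have hk1 := Finset.mem_erase.1 hk
    have hk2 := Finset.mem_erase.1 hk1.2
    rw [hzo k hk2.1 hk1.1]
  have hP2 : ∏ k, Function.update p j v k (z k)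
      = v (z j) * (p i (z i) * ∏ k ∈ (Finset.univ.erase i).erase j, p k (z k)) := by
    rw [prod_update_apply, ← Finset.mul_prod_erase _ _ hi_mem, Finset.erase_right_comm]
  rw [hP1, hP2, hcc]
  set c := v (z j) * (p j (z i) * ∏ k ∈ (Finset.univ.erase i).erase j, p k (z k)) with hc
  rcases eq_or_ne c 0 with h0 | h0
  · rw [h0, mul_zero, mul_zero]
  · have hvne : v (z j) ≠ 0 := fun h => h0 (by rw [hc, h, zero_mul])
    have hpne : p j (z i) ≠ 0 := fun h => h0 (by rw [hc, h, zero_mul, mul_zero])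
    have hprodne : ∀ k ∈ (Finset.univ.erase i).erase j, p k (z k) ≠ 0 := by
      intro k hk hzero
      exact h0 (by rw [hc, Finset.prod_eq_zero hk hzero, mul_zero, mul_zero])
    have hz : ∀ k, z k ∈ Y k := by
      intro k
      rcases eq_or_ne k i with rfl | hki
      · by_contra hni
        exact hpne ((hp j).2.1 _ (by rwa [← hYij]))
      · rcases eq_or_ne k j with rfl | hkj
        · by_contra hnj
          exact hvne (hv _ (by rwa [hYij]))
        · by_contra hnk
          exact hprodne k (Finset.mem_erase.2 ⟨hkj, Finset.mem_erase.2 ⟨hki, Finset.mem_univ k⟩⟩)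
            ((hp k).2.1 _ hnk)
    rw [(hpi i j hij).2 z hz]

end AuxSwap

section AuxCentroid

variable [DecidableEq A]
variable {Y : ι → Finset A} {u : (ι → A) → ℝ} {cls : ι → κ}

lemma mem_cluster_self (cls : ι → κ) (i : ι) : i ∈ cluster cls i := by
  simp [cluster]

lemma cluster_card_pos (cls : ι → κ) (i : ι) : 0 < (cluster cls i).card :=
  Finset.card_pos.2 ⟨i, mem_cluster_self cls i⟩

lemma cls_eq_of_mem_cluster {i j : ι} (hj : j ∈ cluster cls i) : cls j = cls i := by
  simpa [cluster] using hj

lemma cluster_congr {i j : ι} (hij : cls i = cls j) : cluster cls i = cluster cls j := by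
  unfold cluster; rw [hij]

lemma centroid_apply (cls : ι → κ) (p : ι → A → ℝ) (i : ι) (a : A) :
    centroid cls p i a = ((cluster cls i).card : ℝ)⁻¹ * ∑ j ∈ cluster cls i, p j a := by
  unfold centroid
  simp [Finset.sum_apply]

lemma centroid_def' (cls : ι → κ) (p : ι → A → ℝ) (i : ι) :
    centroid cls p i = ((cluster cls i).card : ℝ)⁻¹ • ∑ j ∈ cluster cls i, p j := rfl

lemma centroid_classConst (cls : ι → κ) (p : ι → A → ℝ) {i j : ι} (hij : cls i = cls j) :
    centroid cls p i = centroid cls p j := by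
  unfold centroid; rw [cluster_congr hij]

lemma centroid_mem_Delta (hpi : PermInvariant Y u cls) {p : ι → A → ℝ} (hp : p ∈ Delta Y) :
    centroid cls p ∈ Delta Y := by
  intro i
  have hY' : ∀ j ∈ cluster cls i, Y j = Y i := fun j hj =>
    (hpi j i (cls_eq_of_mem_cluster hj)).1
  have hcpos : (0:ℝ) < ((cluster cls i).card : ℝ) := by
    exact_mod_cast cluster_card_pos cls i
  refine ⟨fun a => ?_, fun a ha => ?_, ?_⟩
  · rw [centroid_apply]
    exact mul_nonneg (inv_nonneg.2 hcpos.le)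
      (Finset.sum_nonneg fun j _ => (hp j).1 a)
  · rw [centroid_apply]
    have : ∀ j ∈ cluster cls i, p j a = 0 := fun j hj =>
      (hp j).2.1 a (by rw [hY' j hj]; exact ha)
    rw [Finset.sum_eq_zero this, mul_zero]
  · have : ∀ a ∈ Y i, centroid cls p i a
        = ((cluster cls i).card : ℝ)⁻¹ * ∑ j ∈ cluster cls i, p j a := fun a _ =>
      centroid_apply cls p i a
    rw [Finset.sum_congr rfl this, ← Finset.mul_sum, Finset.sum_comm]
    have : ∀ j ∈ cluster cls i, ∑ a ∈ Y i, p j a = 1 := by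
      intro j hj
      rw [← hY' j hj]
      exact (hp j).2.2
    rw [Finset.sum_congr rfl this, Finset.sum_const, nsmul_eq_mul, mul_one,
      inv_mul_cancel₀ hcpos.ne']

lemma centroid_sub (cls : ι → κ) (p q : ι → A → ℝ) :
    centroid cls (p - q) = centroid cls p - centroid cls q := by
  funext i a
  simp only [Pi.sub_apply, centroid_apply, Finset.sum_sub_distrib]
  ring

lemma sum_centroid_weight (cls : ι → κ) (F : ι → ℝ) :
    ∑ i, ((cluster cls i).card : ℝ)⁻¹ * ∑ j ∈ cluster cls i, F j = ∑ j, F j := by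
  have step1 : ∀ i : ι, ((cluster cls i).card : ℝ)⁻¹ * ∑ j ∈ cluster cls i, F j
      = ∑ j, if cls j = cls i then ((cluster cls j).card : ℝ)⁻¹ * F j else 0 := by
    intro i
    rw [Finset.mul_sum]
    have hf : ∑ j ∈ cluster cls i, ((cluster cls i).card : ℝ)⁻¹ * F j
        = ∑ j, if cls j = cls i then ((cluster cls i).card : ℝ)⁻¹ * F j else 0 :=
      Finset.sum_filter _ _
    rw [hf]
    refine Finset.sum_congr rfl fun j _ => ?_
    split
    · next h => rw [cluster_congr h]
    · rfl
  rw [Finset.sum_congr rfl fun i _ => step1 i, Finset.sum_comm]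
  refine Finset.sum_congr rfl fun j _ => ?_
  have h2 : ∑ i, (if cls j = cls i then ((cluster cls j).card : ℝ)⁻¹ * F j else 0)
      = ∑ i ∈ Finset.univ.filter (fun i => cls j = cls i),
          ((cluster cls j).card : ℝ)⁻¹ * F j := (Finset.sum_filter _ _).symm
  rw [h2]
  have h3 : Finset.univ.filter (fun i => cls j = cls i) = cluster cls j := by
    unfold cluster
    ext k
    simp [eq_comm]
  rw [h3, Finset.sum_const, nsmul_eq_mul, ← mul_assoc,
    mul_inv_cancel₀ (by exact_mod_cast (cluster_card_pos cls j).ne'), one_mul]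

lemma sum_U_update_centroid (hpi : PermInvariant Y u cls) {p : ι → A → ℝ} (hp : p ∈ Delta Y) :
    ∑ i, U u (Function.update (centroid cls p) i (p i))
      = (Fintype.card ι : ℝ) * U u (centroid cls p) := by
  have hq : centroid cls p ∈ Delta Y := centroid_mem_Delta hpi hp
  have h1 : ∀ i : ι, U u (centroid cls p)
      = ((cluster cls i).card : ℝ)⁻¹
        * ∑ j ∈ cluster cls i, U u (Function.update (centroid cls p) j (p j)) := by
    intro i
    conv_lhs => rw [← Function.update_eq_self i (centroid cls p)]
    rw [centroid_def', U_update_smul, U_update_sum]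
    congr 1
    refine Finset.sum_congr rfl fun j hj => ?_
    have hcls : cls i = cls j := (cls_eq_of_mem_cluster hj).symm
    refine U_update_swap hpi hcls hq (centroid_classConst cls p hcls) ?_
    intro a ha
    exact (hp j).2.1 a (by rwa [(hpi j i (cls_eq_of_mem_cluster hj)).1])
  have hcalc : (Fintype.card ι : ℝ) * U u (centroid cls p)
      = ∑ i, U u (Function.update (centroid cls p) i (p i)) := by
    calc (Fintype.card ι : ℝ) * U u (centroid cls p)
        = ∑ _i : ι, U u (centroid cls p) := by
          rw [Finset.sum_const, nsmul_eq_mul, Finset.card_univ]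
      _ = ∑ i, ((cluster cls i).card : ℝ)⁻¹
            * ∑ j ∈ cluster cls i, U u (Function.update (centroid cls p) j (p j)) :=
          Finset.sum_congr rfl fun i _ => h1 i
      _ = ∑ i, U u (Function.update (centroid cls p) i (p i)) :=
          sum_centroid_weight cls (fun j => U u (Function.update (centroid cls p) j (p j)))
  exact hcalc.symm

end AuxCentroid
section AuxBR

variable [DecidableEq A]
variable {Y : ι → Finset A} {u : (ι → A) → ℝ} {cls : ι → κ}

lemma BR_update_eq_Mi (hY : ∀ i, (Y i).Nonempty) {y b : ι → A → ℝ}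
    (hb : b ∈ BR Y u 0 y) (i : ι) :
    U u (Function.update y i (b i)) = Mi Y hY u y i := by
  obtain ⟨hbs, hbr⟩ := hb i
  refine le_antisymm (U_update_le_Mi hbs) ?_
  obtain ⟨a, ha, hav⟩ := Finset.exists_mem_eq_sup' (hY i)
    (fun a => U u (Function.update y i (Pi.single a (1:ℝ))))
  have := hbr _ (single_mem_simplex ha)
  rw [sub_zero] at this
  rw [Mi, hav]
  exact this

lemma Mi_congr_of_cls (hpi : PermInvariant Y u cls) (hY : ∀ i, (Y i).Nonempty)
    {y : ι → A → ℝ} (hy : y ∈ Delta Y) (hcc : classConst cls y) {i j : ι}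
    (hij : cls i = cls j) : Mi Y hY u y i = Mi Y hY u y j := by
  unfold Mi
  refine Finset.sup'_congr (hY i) ((hpi i j hij).1) fun a ha => ?_
  exact U_update_swap hpi hij hy (hcc i j hij) fun b hb => Pi.single_eq_of_ne (by rintro rfl; exact hb ha) 1

lemma centroid_classConst' (cls : ι → κ) (p : ι → A → ℝ) : classConst cls (centroid cls p) :=
  fun i j hij => centroid_classConst cls p hij

lemma sum_BR_update_eq (hpi : PermInvariant Y u cls) (hY : ∀ i, (Y i).Nonempty)
    {q b : ι → A → ℝ} (hq : q ∈ Delta Y) (hb : b ∈ BR Y u 0 (centroid cls q)) (i : ι) :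
    U u (Function.update (centroid cls q) i (centroid cls b i))
      = Mi Y hY u (centroid cls q) i := by
  set w := centroid cls q with hw
  have hwD : w ∈ Delta Y := centroid_mem_Delta hpi hq
  rw [centroid_def', U_update_smul, U_update_sum]
  have hstep : ∀ j ∈ cluster cls i, U u (Function.update w i (b j)) = Mi Y hY u w i := by
    intro j hj
    have hcls : cls i = cls j := (cls_eq_of_mem_cluster hj).symm
    have hsupp : ∀ a, a ∉ Y i → b j a = 0 := by
      intro a ha
      exact (hb j).1.2.1 a (by rwa [(hpi j i (cls_eq_of_mem_cluster hj)).1])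
    rw [U_update_swap hpi hcls hwD (centroid_classConst cls q hcls) hsupp,
      BR_update_eq_Mi hY hb j]
    exact (Mi_congr_of_cls hpi hY hwD (centroid_classConst' cls q) hcls).symm
  rw [Finset.sum_congr rfl hstep, Finset.sum_const, nsmul_eq_mul, ← mul_assoc,
    inv_mul_cancel₀ (by exact_mod_cast (cluster_card_pos cls i).ne'), one_mul]

lemma D_eq_Phi (hpi : PermInvariant Y u cls) (hY : ∀ i, (Y i).Nonempty)
    {q b : ι → A → ℝ} (hq : q ∈ Delta Y) (hb : b ∈ BR Y u 0 (centroid cls q)) :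
    ∑ i, U u (Function.update (centroid cls q) i (centroid cls (b - q) i))
      = Phi Y hY u (centroid cls q) := by
  have h1 : ∀ i : ι, U u (Function.update (centroid cls q) i (centroid cls (b - q) i))
      = Mi Y hY u (centroid cls q) i - U u (centroid cls q) := by
    intro i
    rw [centroid_sub]
    have : (centroid cls b - centroid cls q) i = centroid cls b i - centroid cls q i := rfl
    rw [this, U_update_sub, sum_BR_update_eq hpi hY hq hb i, Function.update_eq_self]
  rw [Finset.sum_congr rfl fun i _ => h1 i]
  rfl

lemma mem_MCE_of_Phi_eq_zero (hpi : PermInvariant Y u cls) (hY : ∀ i, (Y i).Nonempty)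
    {p : ι → A → ℝ} (hp : p ∈ Delta Y)
    (h0 : Phi Y hY u (centroid cls p) = 0) : p ∈ MCE Y u cls := by
  refine ⟨hp, fun i qi hqi => ?_⟩
  have hterm : ∀ k, 0 ≤ Mi Y hY u (centroid cls p) k
      - U u (Function.update (centroid cls p) k (p k)) :=
    fun k => sub_nonneg.2 (U_update_le_Mi (hp k))
  have hsum : ∑ k, (Mi Y hY u (centroid cls p) k
      - U u (Function.update (centroid cls p) k (p k))) = 0 := by
    rw [Finset.sum_sub_distrib, sum_U_update_centroid hpi hp]
    unfold Phi at h0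
    rw [Finset.sum_sub_distrib, Finset.sum_const, nsmul_eq_mul, Finset.card_univ] at h0
    linarith
  have hi0 := (Finset.sum_eq_zero_iff_of_nonneg (fun k _ => hterm k)).1 hsum i (Finset.mem_univ i)
  have hle := U_update_le_Mi (u := u) (hY := hY) (y := centroid cls p) hqi
  linarith

end AuxBR

section AuxTopo

variable [DecidableEq A]
variable {Y : ι → Finset A} {u : (ι → A) → ℝ} {cls : ι → κ}

lemma continuous_U (u : (ι → A) → ℝ) : Continuous (U u) := by
  unfold U
  exact continuous_finset_sum _ fun y _ => continuous_const.mul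
    (continuous_finset_prod _ fun i _ => (continuous_apply (y i)).comp (continuous_apply i))

lemma continuous_centroid (cls : ι → κ) :
    Continuous (centroid cls : (ι → A → ℝ) → ι → A → ℝ) := by
  unfold centroid
  exact continuous_pi fun i =>
    (continuous_finset_sum _ fun j _ => continuous_apply j).const_smul (g := fun a : ι → A → ℝ => ∑ j ∈ cluster cls i, a j) ((cluster cls i).card : ℝ)⁻¹

lemma continuous_update_const (i : ι) (v : A → ℝ) :
    Continuous (fun y : ι → A → ℝ => Function.update y i v) := by
  refine continuous_pi fun j => ?_
  simp only [Function.update_apply]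
  by_cases h : j = i
  · simp only [if_pos h]
    exact continuous_const
  · simp only [if_neg h]
    exact continuous_apply j

lemma coord_le_one {p : ι → A → ℝ} (hp : p ∈ Delta Y) (i : ι) (a : A) : p i a ≤ 1 := by
  by_cases ha : a ∈ Y i
  · calc p i a ≤ ∑ b ∈ Y i, p i b := Finset.single_le_sum (fun b _ => (hp i).1 b) ha
      _ = 1 := (hp i).2.2
  · rw [(hp i).2.1 a ha]; norm_num

lemma abs_U_le {p : ι → A → ℝ} (hp : p ∈ Delta Y) :
    |U u p| ≤ ∑ y : ι → A, |u y| := by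
  unfold U
  refine (Finset.abs_sum_le_sum_abs _ _).trans (Finset.sum_le_sum fun y _ => ?_)
  rw [abs_mul]
  have h1 : |∏ i, p i (y i)| ≤ 1 := by
    rw [Finset.abs_prod]
    refine Finset.prod_le_one (fun i _ => abs_nonneg _) (fun i _ => ?_)
    rw [abs_of_nonneg ((hp i).1 _)]
    exact coord_le_one hp i (y i)
  calc |u y| * |∏ i, p i (y i)| ≤ |u y| * 1 := mul_le_mul_of_nonneg_left h1 (abs_nonneg _)
    _ = |u y| := mul_one _

lemma isClosed_simplex (Y' : Finset A) : IsClosed (simplex Y') := by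
  have : simplex Y' = {q : A → ℝ | ∀ a, 0 ≤ q a} ∩
      ({q : A → ℝ | ∀ a, a ∉ Y' → q a = 0} ∩ {q : A → ℝ | ∑ a ∈ Y', q a = 1}) := rfl
  rw [this]
  refine IsClosed.inter ?_ (IsClosed.inter ?_ ?_)
  · rw [Set.setOf_forall]
    exact isClosed_iInter fun a => isClosed_le continuous_const (continuous_apply a)
  · rw [Set.setOf_forall]
    refine isClosed_iInter fun a => ?_
    by_cases ha : a ∈ Y'
    · have : {q : A → ℝ | a ∉ Y' → q a = 0} = Set.univ := by
        ext q; simp [ha]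
      rw [this]; exact isClosed_univ
    · have : {q : A → ℝ | a ∉ Y' → q a = 0} = {q : A → ℝ | q a = 0} := by
        ext q; simp [ha]
      rw [this]
      exact isClosed_eq (continuous_apply a) continuous_const
  · exact isClosed_eq (continuous_finset_sum _ fun a _ => continuous_apply a) continuous_const

lemma isClosed_Delta : IsClosed (Delta Y) := by
  have : Delta Y = ⋂ i, (fun p : ι → A → ℝ => p i) ⁻¹' simplex (Y i) := by
    ext p; simp only [Set.mem_iInter, Set.mem_preimage]; rfl
  rw [this]
  exact isClosed_iInter fun i => (isClosed_simplex (Y i)).preimage (continuous_apply i)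

lemma norm_le_one_of_mem_Delta {p : ι → A → ℝ} (hp : p ∈ Delta Y) : ‖p‖ ≤ 1 := by
  rw [pi_norm_le_iff_of_nonneg (by norm_num)]
  intro i
  rw [pi_norm_le_iff_of_nonneg (by norm_num)]
  intro a
  rw [Real.norm_eq_abs, abs_le]
  exact ⟨by linarith [(hp i).1 a], coord_le_one hp i a⟩

lemma isCompact_Delta : IsCompact (Delta Y) := by
  refine (isCompact_closedBall (0 : ι → A → ℝ) 1).of_isClosed_subset isClosed_Delta ?_
  intro p hp
  rw [Metric.mem_closedBall, dist_zero_right]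
  exact norm_le_one_of_mem_Delta hp

lemma norm_sub_le_one_of_mem_Delta {p q : ι → A → ℝ} (hp : p ∈ Delta Y) (hq : q ∈ Delta Y) :
    ‖p - q‖ ≤ 1 := by
  rw [pi_norm_le_iff_of_nonneg (by norm_num)]
  intro i
  rw [pi_norm_le_iff_of_nonneg (by norm_num)]
  intro a
  have h1 := (hp i).1 a
  have h2 := (hq i).1 a
  have h3 := coord_le_one hp i a
  have h4 := coord_le_one hq i a
  have : (p - q) i a = p i a - q i a := rfl
  rw [this, Real.norm_eq_abs, abs_le]
  constructor <;> linarith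

end AuxTopo
section PrimMachinery

open Set

/-- `f` is a primitive of `g` on `[0,∞)`. -/
def Prim (f g : ℝ → ℝ) : Prop :=
  (∀ t : ℝ, IntegrableOn g (Ioc 0 t)) ∧ ∀ t : ℝ, 0 ≤ t → f t = f 0 + ∫ r in Ioc (0:ℝ) t, g r

lemma Prim.congr {f g f' g' : ℝ → ℝ} (h : Prim f g) (hf : ∀ t, f t = f' t)
    (hg : ∀ t, g t = g' t) : Prim f' g' := by
  have hff : f' = f := funext fun t => (hf t).symm
  have hgg : g' = g := funext fun t => (hg t).symm
  rw [hff, hgg]; exact h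

lemma Prim.const (c : ℝ) : Prim (fun _ => c) (fun _ => 0) :=
  ⟨fun _ => integrableOn_zero, fun t _ => by simp⟩

lemma Prim.add {f₁ g₁ f₂ g₂ : ℝ → ℝ} (h₁ : Prim f₁ g₁) (h₂ : Prim f₂ g₂) :
    Prim (fun t => f₁ t + f₂ t) (fun t => g₁ t + g₂ t) := by
  refine ⟨fun t => (h₁.1 t).add (h₂.1 t), fun t ht => ?_⟩
  dsimp only
  rw [h₁.2 t ht, h₂.2 t ht, integral_add (h₁.1 t) (h₂.1 t)]
  ring

lemma Prim.const_mul {f g : ℝ → ℝ} (c : ℝ) (h : Prim f g) :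
    Prim (fun t => c * f t) (fun t => c * g t) := by
  refine ⟨fun t => (h.1 t).const_mul c, fun t ht => ?_⟩
  dsimp only
  rw [h.2 t ht, integral_const_mul]
  ring

lemma Prim.sum {β : Type*} [DecidableEq β] (s : Finset β) (F G : β → ℝ → ℝ)
    (h : ∀ b ∈ s, Prim (F b) (G b)) :
    Prim (fun t => ∑ b ∈ s, F b t) (fun t => ∑ b ∈ s, G b t) := by
  induction s using Finset.induction_on with
  | empty => simpa using Prim.const 0
  | @insert a s ha ih =>
    have := (h a (Finset.mem_insert_self a s)).add
      (ih fun b hb => h b (Finset.mem_insert_of_mem hb))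
    exact this.congr (fun t => by rw [Finset.sum_insert ha])
      (fun t => by rw [Finset.sum_insert ha])

lemma Prim.continuousOn {f g : ℝ → ℝ} (h : Prim f g) : ContinuousOn f (Ici 0) := by
  intro t₀ ht₀
  have hint : IntegrableOn g (Icc 0 (t₀ + 1)) := by
    rw [integrableOn_Icc_iff_integrableOn_Ioc]
    exact h.1 (t₀ + 1)
  have hcont : ContinuousOn (fun s => f 0 + ∫ r in Ioc (0:ℝ) s, g r) (Icc 0 (t₀ + 1)) :=
    continuousOn_const.add (intervalIntegral.continuousOn_primitive hint)
  have hmem : Icc (0:ℝ) (t₀ + 1) ∈ nhdsWithin t₀ (Ici 0) := by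
    rw [mem_nhdsWithin]
    exact ⟨Iio (t₀ + 1), isOpen_Iio, by simp only [mem_Iio]; linarith,
      fun y hy => ⟨hy.2, hy.1.le⟩⟩
  have hw : ContinuousWithinAt (fun s => f 0 + ∫ r in Ioc (0:ℝ) s, g r) (Ici 0) t₀ :=
    (hcont t₀ ⟨ht₀, by linarith⟩).mono_of_mem_nhdsWithin hmem
  exact hw.congr (fun y hy => h.2 y hy) (h.2 t₀ ht₀)

lemma primitive_inner_Iic {g : ℝ → ℝ} (hg : ∀ s : ℝ, IntegrableOn g (Ioc 0 s)) {t r : ℝ}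
    (hr : r ∈ Ioc (0:ℝ) t) :
    ∫ v in Ioc (0:ℝ) t, (if v ≤ r then g v else 0) = ∫ v in Ioc (0:ℝ) r, g v := by
  have h1 : (fun v => if v ≤ r then g v else 0) = (Iic r).indicator g := by
    funext v; rw [Set.indicator_apply]; simp [mem_Iic]
  rw [h1, setIntegral_indicator measurableSet_Iic, Set.Ioc_inter_Iic, min_eq_right hr.2]

lemma primitive_inner_Ici {g : ℝ → ℝ} (hg : ∀ s : ℝ, IntegrableOn g (Ioc 0 s)) {t r : ℝ}
    (hr : r ∈ Ioc (0:ℝ) t) :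
    ∫ v in Ioc (0:ℝ) t, (if r ≤ v then g v else 0)
      = (∫ v in Ioc (0:ℝ) t, g v) - ∫ v in Ioc (0:ℝ) r, g v := by
  have h1 : (fun v => if r ≤ v then g v else 0) = (Ici r).indicator g := by
    funext v; rw [Set.indicator_apply]; simp [mem_Ici]
  rw [h1, setIntegral_indicator measurableSet_Ici]
  have h2 : Ioc (0:ℝ) t ∩ Ici r = Icc r t := by
    ext v
    simp only [mem_inter_iff, mem_Ioc, mem_Ici, mem_Icc]
    constructor
    · rintro ⟨⟨_, hvt⟩, hrv⟩; exact ⟨hrv, hvt⟩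
    · rintro ⟨hrv, hvt⟩; exact ⟨⟨lt_of_lt_of_le hr.1 hrv, hvt⟩, hrv⟩
  rw [h2, integral_Icc_eq_integral_Ioc]
  have h3 : ∫ v in Ioc (0:ℝ) t, g v
      = (∫ v in Ioc (0:ℝ) r, g v) + ∫ v in Ioc r t, g v := by
    rw [← setIntegral_union (Set.Ioc_disjoint_Ioc_of_le le_rfl) measurableSet_Ioc (hg r)
      ((hg t).mono_set (Set.Ioc_subset_Ioc_left hr.1.le)),
      Set.Ioc_union_Ioc_eq_Ioc hr.1.le hr.2]
  linarith

lemma primitive_mul_core {g₁ g₂ : ℝ → ℝ} (h₁ : ∀ s : ℝ, IntegrableOn g₁ (Ioc 0 s))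
    (h₂ : ∀ s : ℝ, IntegrableOn g₂ (Ioc 0 s)) {t : ℝ}
    (hA₁ : IntegrableOn (fun r => g₁ r * ∫ v in Ioc (0:ℝ) r, g₂ v) (Ioc 0 t))
    (hA₂ : IntegrableOn (fun r => (∫ v in Ioc (0:ℝ) r, g₁ v) * g₂ r) (Ioc 0 t)) :
    ((∫ r in Ioc (0:ℝ) t, g₁ r * ∫ v in Ioc (0:ℝ) r, g₂ v)
      + ∫ r in Ioc (0:ℝ) t, (∫ v in Ioc (0:ℝ) r, g₁ v) * g₂ r)
      = (∫ r in Ioc (0:ℝ) t, g₁ r) * ∫ r in Ioc (0:ℝ) t, g₂ r := by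
  have hswap : (∫ r in Ioc (0:ℝ) t, (∫ v in Ioc (0:ℝ) r, g₁ v) * g₂ r)
      = ∫ v in Ioc (0:ℝ) t,
          g₁ v * ((∫ w in Ioc (0:ℝ) t, g₂ w) - ∫ w in Ioc (0:ℝ) v, g₂ w) := by
    have e1 : ∀ r ∈ Ioc (0:ℝ) t, (∫ v in Ioc (0:ℝ) r, g₁ v) * g₂ r
        = ∫ v in Ioc (0:ℝ) t, (if v ≤ r then g₁ v * g₂ r else 0) := by
      intro r hr
      have : (fun v => if v ≤ r then g₁ v * g₂ r else 0)
          = fun v => (if v ≤ r then g₁ v else 0) * g₂ r := by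
        funext v; split <;> simp
      rw [this, integral_mul_const, primitive_inner_Iic h₁ hr]
    rw [setIntegral_congr_fun measurableSet_Ioc e1]
    have hInt : Integrable (Function.uncurry fun r v => if v ≤ r then g₁ v * g₂ r else 0)
        ((volume.restrict (Ioc (0:ℝ) t)).prod (volume.restrict (Ioc (0:ℝ) t))) := by
      have base : Integrable (fun z : ℝ × ℝ => g₂ z.1 * g₁ z.2)
          ((volume.restrict (Ioc (0:ℝ) t)).prod (volume.restrict (Ioc (0:ℝ) t))) :=
        Integrable.mul_prod (h₂ t) (h₁ t)
      have heq : (Function.uncurry fun r v => if v ≤ r then g₁ v * g₂ r else 0)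
          = {z : ℝ × ℝ | z.2 ≤ z.1}.indicator (fun z => g₂ z.1 * g₁ z.2) := by
        funext z
        rw [Set.indicator_apply]
        simp only [Function.uncurry, Set.mem_setOf_eq]
        split <;> [ring; rfl]
      rw [heq]
      exact base.indicator (measurableSet_le measurable_snd measurable_fst)
    rw [MeasureTheory.integral_integral_swap hInt]
    refine setIntegral_congr_fun measurableSet_Ioc fun v hv => ?_
    have : (fun r => if v ≤ r then g₁ v * g₂ r else 0)
        = fun r => g₁ v * (if v ≤ r then g₂ r else 0) := by
      funext r; split <;> simp
    rw [this, integral_const_mul, primitive_inner_Ici h₂ hv]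
  rw [hswap]
  have hsplit : ∫ v in Ioc (0:ℝ) t,
        g₁ v * ((∫ w in Ioc (0:ℝ) t, g₂ w) - ∫ w in Ioc (0:ℝ) v, g₂ w)
      = (∫ v in Ioc (0:ℝ) t, g₁ v * ∫ w in Ioc (0:ℝ) t, g₂ w)
        - ∫ v in Ioc (0:ℝ) t, g₁ v * ∫ w in Ioc (0:ℝ) v, g₂ w := by
    rw [← integral_sub ((h₁ t).mul_const _) hA₁]
    refine setIntegral_congr_fun measurableSet_Ioc fun v _ => ?_
    ring
  rw [hsplit, integral_mul_const]
  ring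

lemma Prim.mul {f₁ g₁ f₂ g₂ : ℝ → ℝ} (h₁ : Prim f₁ g₁) (h₂ : Prim f₂ g₂) :
    Prim (fun t => f₁ t * f₂ t) (fun t => g₁ t * f₂ t + f₁ t * g₂ t) := by
  have key : ∀ (f g : ℝ → ℝ), Prim f g → ∀ (g' : ℝ → ℝ), (∀ s : ℝ, IntegrableOn g' (Ioc 0 s)) →
      ∀ t : ℝ, IntegrableOn (fun r => g' r * f r) (Ioc 0 t) := by
    intro f g hf g' hg' t
    rcases le_or_gt t 0 with ht | ht
    · rw [Set.Ioc_eq_empty (by exact not_lt.2 ht)]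
      exact integrableOn_empty
    obtain ⟨C, hC⟩ := (isCompact_Icc (a := (0:ℝ)) (b := t)).exists_bound_of_continuousOn
      (hf.continuousOn.mono (fun z hz => hz.1))
    have hmeas : AEStronglyMeasurable f (volume.restrict (Ioc 0 t)) :=
      (hf.continuousOn.mono (fun z (hz : z ∈ Ioc (0:ℝ) t) => le_of_lt hz.1)).aestronglyMeasurable
        measurableSet_Ioc
    have hbd : ∀ᵐ r ∂(volume.restrict (Ioc (0:ℝ) t)), ‖f r‖ ≤ C :=
      (ae_restrict_iff' measurableSet_Ioc).2 (Filter.Eventually.of_forall fun r hr =>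
        hC r ⟨hr.1.le, hr.2⟩)
    have := MeasureTheory.Integrable.bdd_mul (hg' t) hmeas hbd
    exact this.congr (Filter.Eventually.of_forall fun r => by dsimp; ring)
  have kint₁ : ∀ t : ℝ, IntegrableOn (fun r => g₁ r * f₂ r) (Ioc 0 t) :=
    fun t => key f₂ g₂ h₂ g₁ h₁.1 t
  have kint₂ : ∀ t : ℝ, IntegrableOn (fun r => f₁ r * g₂ r) (Ioc 0 t) := by
    intro t
    exact (key f₁ g₁ h₁ g₂ h₂.1 t).congr (Filter.Eventually.of_forall fun r => by dsimp; ring)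
  refine ⟨fun t => (kint₁ t).add (kint₂ t), fun t ht => ?_⟩
  have hF₂ : ∀ t : ℝ, IntegrableOn (fun r => g₁ r * ∫ v in Ioc (0:ℝ) r, g₂ v) (Ioc 0 t) := by
    intro s
    have : IntegrableOn (fun r => g₁ r * f₂ r - g₁ r * f₂ 0) (Ioc 0 s) :=
      (kint₁ s).sub ((h₁.1 s).mul_const _)
    refine Integrable.congr this (((ae_restrict_iff' measurableSet_Ioc).2
      (Filter.Eventually.of_forall fun r hr => ?_)))
    dsimp only
    rw [h₂.2 r hr.1.le]
    ring
  have hF₁ : ∀ t : ℝ, IntegrableOn (fun r => (∫ v in Ioc (0:ℝ) r, g₁ v) * g₂ r) (Ioc 0 t) := by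
    intro s
    have : IntegrableOn (fun r => f₁ r * g₂ r - f₁ 0 * g₂ r) (Ioc 0 s) :=
      (kint₂ s).sub ((h₂.1 s).const_mul _)
    refine Integrable.congr this (((ae_restrict_iff' measurableSet_Ioc).2
      (Filter.Eventually.of_forall fun r hr => ?_)))
    dsimp only
    rw [h₁.2 r hr.1.le]
    ring
  have e : ∀ r ∈ Ioc (0:ℝ) t, g₁ r * f₂ r + f₁ r * g₂ r
      = (g₁ r * f₂ 0 + f₁ 0 * g₂ r)
        + (g₁ r * (∫ v in Ioc (0:ℝ) r, g₂ v) + (∫ v in Ioc (0:ℝ) r, g₁ v) * g₂ r) := by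
    intro r hr
    rw [h₁.2 r hr.1.le, h₂.2 r hr.1.le]
    ring
  have I1 : IntegrableOn (fun r => g₁ r * f₂ 0 + f₁ 0 * g₂ r) (Ioc 0 t) :=
    ((h₁.1 t).mul_const _).add ((h₂.1 t).const_mul _)
  have I2 : IntegrableOn (fun r => g₁ r * (∫ v in Ioc (0:ℝ) r, g₂ v)
      + (∫ v in Ioc (0:ℝ) r, g₁ v) * g₂ r) (Ioc 0 t) := (hF₂ t).add (hF₁ t)
  dsimp only
  rw [setIntegral_congr_fun measurableSet_Ioc e,
    integral_add I1 I2,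
    integral_add ((h₁.1 t).mul_const _) ((h₂.1 t).const_mul _),
    integral_add (hF₂ t) (hF₁ t),
    integral_mul_const, integral_const_mul,
    primitive_mul_core h₁.1 h₂.1 (hF₂ t) (hF₁ t),
    h₁.2 t ht, h₂.2 t ht]
  ring

lemma Prim.prod {β : Type*} [DecidableEq β] (s : Finset β) (F G : β → ℝ → ℝ)
    (h : ∀ b ∈ s, Prim (F b) (G b)) :
    Prim (fun t => ∏ b ∈ s, F b t)
      (fun t => ∑ b ∈ s, G b t * ∏ c ∈ s.erase b, F c t) := by
  induction s using Finset.induction_on with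
  | empty => simpa using Prim.const 1
  | @insert a s ha ih =>
    have hmul := (h a (Finset.mem_insert_self a s)).mul
      (ih fun b hb => h b (Finset.mem_insert_of_mem hb))
    refine hmul.congr (fun t => by rw [Finset.prod_insert ha]) (fun t => ?_)
    rw [Finset.sum_insert ha, Finset.erase_insert ha]
    congr 1
    rw [Finset.mul_sum]
    refine Finset.sum_congr rfl fun b hb => ?_
    rw [Finset.erase_insert_of_ne (by rintro rfl; exact ha hb) (s := s),
      Finset.prod_insert (fun hmem => ha (Finset.erase_subset _ _ hmem))]
    ring

end PrimMachinery
section AuxConn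

lemma isPreconnected_iInter_nested {X : Type*} [TopologicalSpace X] [T2Space X]
    (K : ℕ → Set X) (hcomp : ∀ n, IsCompact (K n)) (hcl : ∀ n, IsClosed (K n))
    (hant : ∀ n, K (n + 1) ⊆ K n) (hconn : ∀ n, IsPreconnected (K n))
    (hne : ∀ n, (K n).Nonempty) : IsPreconnected (⋂ n, K n) := by
  intro uu vv hu hv hcover hSu hSv
  by_contra hempty
  rw [Set.not_nonempty_iff_eq_empty] at hempty
  set S := ⋂ n, K n with hS
  have hSsub : ∀ n, S ⊆ K n := fun n => Set.iInter_subset K n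
  have hScl : IsClosed S := isClosed_iInter hcl
  have hScomp : IsCompact S := (hcomp 0).of_isClosed_subset hScl (hSsub 0)
  set Aset := S \ vv with hA
  set Bset := S \ uu with hB
  have hAcl : IsClosed Aset := hScl.sdiff hv
  have hBcl : IsClosed Bset := hScl.sdiff hu
  have hAcomp : IsCompact Aset := hScomp.of_isClosed_subset hAcl Set.diff_subset
  have hBcomp : IsCompact Bset := hScomp.of_isClosed_subset hBcl Set.diff_subset
  have hAne : Aset.Nonempty := by
    obtain ⟨z, hz⟩ := hSu
    refine ⟨z, hz.1, fun hzv => ?_⟩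
    have hmem : z ∈ S ∩ (uu ∩ vv) := ⟨hz.1, hz.2, hzv⟩
    rw [hempty] at hmem
    exact hmem
  have hBne : Bset.Nonempty := by
    obtain ⟨z, hz⟩ := hSv
    refine ⟨z, hz.1, fun hzu => ?_⟩
    have hmem : z ∈ S ∩ (uu ∩ vv) := ⟨hz.1, hzu, hz.2⟩
    rw [hempty] at hmem
    exact hmem
  have hdisj : Disjoint Aset Bset := by
    rw [Set.disjoint_left]
    rintro z ⟨hzS, hzv⟩ ⟨_, hzu⟩
    rcases hcover hzS with h | h
    · exact hzu h
    · exact hzv h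
  obtain ⟨u', v', hou, hov, hAu, hBv, huv⟩ :=
    SeparatedNhds.of_isCompact_isCompact hAcomp hBcomp hdisj
  set T : ℕ → Set X := fun n => K n \ (u' ∪ v') with hT
  have hTcl : ∀ n, IsClosed (T n) := fun n => (hcl n).sdiff (hou.union hov)
  have hTcomp : IsCompact (T 0) := (hcomp 0).of_isClosed_subset (hTcl 0) Set.diff_subset
  have hTne : ∀ n, (T n).Nonempty := by
    intro n
    rw [Set.diff_nonempty]
    intro hsub
    obtain ⟨a, haA⟩ := hAne
    obtain ⟨b, hbB⟩ := hBne
    have h1 := hconn n u' v' hou hov hsub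
      ⟨a, hSsub n haA.1, hAu haA⟩ ⟨b, hSsub n hbB.1, hBv hbB⟩
    obtain ⟨z, _, hz⟩ := h1
    exact (Set.disjoint_left.1 huv) hz.1 hz.2
  have hTant : ∀ n, T (n + 1) ⊆ T n := fun n =>
    Set.diff_subset_diff_left (hant n)
  obtain ⟨z, hz⟩ := IsCompact.nonempty_iInter_of_sequence_nonempty_isCompact_isClosed
    T hTant hTne hTcomp hTcl
  have hzS : z ∈ S := Set.mem_iInter.2 fun n => (Set.mem_iInter.1 hz n).1
  have hznot : z ∉ u' ∪ v' := (Set.mem_iInter.1 hz 0).2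
  have hzuv : z ∉ uu ∨ z ∉ vv := by
    by_contra hcon
    push_neg at hcon
    have hmem : z ∈ S ∩ (uu ∩ vv) := ⟨hzS, hcon.1, hcon.2⟩
    rw [hempty] at hmem
    exact hmem
  rcases hcover hzS with h | h
  · have hzv : z ∉ vv := by
      rcases hzuv with h' | h'
      · exact absurd h h'
      · exact h'
    exact hznot (Set.mem_union_left _ (hAu ⟨hzS, hzv⟩))
  · have hzu : z ∉ uu := by
      rcases hzuv with h' | h'
      · exact h'
      · exact absurd h h'
    exact hznot (Set.mem_union_right _ (hBv ⟨hzS, hzu⟩))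

end AuxConn

section SolutionPrim

open Set

variable [DecidableEq A]
variable {Y : ι → Finset A} {u : (ι → A) → ℝ} {cls : ι → κ}

lemma sum_U_update_eq (u : (ι → A) → ℝ) (q v : ι → A → ℝ) :
    ∑ i, U u (Function.update q i (v i))
      = ∑ y : ι → A, u y
          * ∑ i, v i (y i) * ∏ j ∈ Finset.univ.erase i, q j (y j) := by
  simp only [U_update, Finset.mul_sum]
  rw [Finset.sum_comm]

lemma coord_prim {x g : ℝ → ι → A → ℝ}
    (hg : ∀ t : ℝ, IntegrableOn g (Ioc 0 t))
    (hxint : ∀ t : ℝ, 0 ≤ t → x t = x 0 + ∫ s in Ioc (0:ℝ) t, g s)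
    (i : ι) (a : A) : Prim (fun t => x t i a) (fun t => g t i a) := by
  set L : (ι → A → ℝ) →L[ℝ] ℝ :=
    (ContinuousLinearMap.proj (R := ℝ) (φ := fun _ : A => ℝ) a).comp
      (ContinuousLinearMap.proj (R := ℝ) (φ := fun _ : ι => A → ℝ) i) with hL
  have hLapp : ∀ w : ι → A → ℝ, L w = w i a := fun w => rfl
  constructor
  · intro t
    exact L.integrable_comp (hg t)
  · intro t ht
    have h0 := congrFun (congrFun (hxint t ht) i) a
    have hcomm := L.integral_comp_comm (hg t)
    dsimp only
    rw [h0]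
    have : (x 0 + ∫ s in Ioc (0:ℝ) t, g s) i a
        = x 0 i a + (∫ s in Ioc (0:ℝ) t, g s) i a := rfl
    rw [this]
    congr 1
    have h2 : (∫ s in Ioc (0:ℝ) t, g s) i a = L (∫ s in Ioc (0:ℝ) t, g s) := rfl
    rw [h2, ← hcomm]
    rfl

lemma centroid_coord_prim {x g : ℝ → ι → A → ℝ}
    (hg : ∀ t : ℝ, IntegrableOn g (Ioc 0 t))
    (hxint : ∀ t : ℝ, 0 ≤ t → x t = x 0 + ∫ s in Ioc (0:ℝ) t, g s)
    (i : ι) (a : A) :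
    Prim (fun t => centroid cls (x t) i a) (fun t => centroid cls (g t) i a) := by
  have h1 := Prim.sum (cluster cls i) (fun j => fun t => x t j a)
    (fun j => fun t => g t j a) (fun j _ => coord_prim hg hxint j a)
  have h2 := h1.const_mul ((cluster cls i).card : ℝ)⁻¹
  exact h2.congr (fun t => by rw [← centroid_apply]) (fun t => by rw [← centroid_apply])

lemma U_centroid_prim {x g : ℝ → ι → A → ℝ}
    (hg : ∀ t : ℝ, IntegrableOn g (Ioc 0 t))
    (hxint : ∀ t : ℝ, 0 ≤ t → x t = x 0 + ∫ s in Ioc (0:ℝ) t, g s) :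
    Prim (fun t => U u (centroid cls (x t)))
      (fun t => ∑ i, U u (Function.update (centroid cls (x t)) i (centroid cls (g t) i))) := by
  have hmono : ∀ y : ι → A,
      Prim (fun t => ∏ i, centroid cls (x t) i (y i))
        (fun t => ∑ i, centroid cls (g t) i (y i)
          * ∏ j ∈ Finset.univ.erase i, centroid cls (x t) j (y j)) :=
    fun y => Prim.prod Finset.univ _ _ (fun i _ => centroid_coord_prim hg hxint i (y i))
  have hsum := Prim.sum Finset.univ
    (fun y => fun t => u y * ∏ i, centroid cls (x t) i (y i))
    (fun y => fun t => u y * ∑ i, centroid cls (g t) i (y i)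
      * ∏ j ∈ Finset.univ.erase i, centroid cls (x t) j (y j))
    (fun y _ => (hmono y).const_mul (u y))
  refine hsum.congr (fun t => rfl) (fun t => ?_)
  rw [sum_U_update_eq]

lemma sol_sub_eq {x g : ℝ → ι → A → ℝ}
    (hg : ∀ t : ℝ, IntegrableOn g (Ioc 0 t))
    (hxint : ∀ t : ℝ, 0 ≤ t → x t = x 0 + ∫ s in Ioc (0:ℝ) t, g s)
    {s t : ℝ} (hs : 0 ≤ s) (hst : s ≤ t) :
    x t - x s = ∫ r in Ioc s t, g r := by
  rw [hxint t (hs.trans hst), hxint s hs]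
  have hu : Ioc (0:ℝ) t = Ioc 0 s ∪ Ioc s t := (Ioc_union_Ioc_eq_Ioc hs hst).symm
  rw [hu, setIntegral_union (Set.Ioc_disjoint_Ioc_of_le le_rfl) measurableSet_Ioc (hg s)
    ((hg t).mono_set (Set.Ioc_subset_Ioc_left hs))]
  abel

end SolutionPrim
variable [Nonempty ι]

/-- **Proposition 1(ii).** The ω-limit set of every solution of the joint CT-ECFP inclusion
`q̇ ∈ BR(q̄) − q` is a connected subset of MCE along which
`V(p) = (1/n) ∑ᵢ U(pᵢ, p̄_{-i})` is constant. -/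
theorem omegaLimit_of_joint_solution
    (Y : ι → Finset A) (hY : ∀ i, (Y i).Nonempty) (u : (ι → A) → ℝ)
    (cls : ι → κ) (hpi : PermInvariant Y u cls)
    (x : ℝ → ι → A → ℝ) (hx : IsSolution Y (Fjoint Y u cls) x) :
    IsConnected (omegaLimitSet x) ∧ omegaLimitSet x ⊆ MCE Y u cls ∧
      ∀ p ∈ omegaLimitSet x, ∀ p' ∈ omegaLimitSet x, Vfun u cls p = Vfun u cls p' := by
  letI : DecidableEq A := Classical.decEq A
  obtain ⟨hxD, g, hgli, hgae, hxint⟩ := hx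
  -- integrability of the selection on bounded intervals
  have hg : ∀ t : ℝ, IntegrableOn g (Set.Ioc 0 t) := by
    intro t
    rcases le_or_gt t 0 with ht | ht
    · rw [Set.Ioc_eq_empty (not_lt.2 ht)]
      exact integrableOn_empty
    · exact (hgli.integrableOn_compact_subset
        (Set.Icc_subset_Ici_self : Set.Icc (0:ℝ) t ⊆ Set.Ici 0) isCompact_Icc).mono_set
        Set.Ioc_subset_Icc_self
  -- a.e. decomposition of the selection
  have hgFj : ∀ᵐ r ∂(volume.restrict (Set.Ici (0:ℝ))),
      ∃ b ∈ BR Y u 0 (centroid cls (x r)), g r = b - x r := by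
    filter_upwards [hgae] with r hr
    obtain ⟨b, hb, hbe⟩ := hr
    exact ⟨b, hb, hbe.symm⟩
  -- the Lyapunov function along the trajectory
  set h : ℝ → ℝ := fun t => U u (centroid cls (x t)) with hhdef
  set D : ℝ → ℝ := fun t =>
    ∑ i, U u (Function.update (centroid cls (x t)) i (centroid cls (g t) i)) with hDdef
  have hPrim : Prim h D := U_centroid_prim hg hxint
  have hDae : ∀ᵐ r ∂(volume.restrict (Set.Ici (0:ℝ))),
      D r = Phi Y hY u (centroid cls (x r)) ∧ 0 ≤ D r := by
    filter_upwards [hgFj, ae_restrict_mem measurableSet_Ici] with r hr hr0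
    obtain ⟨b, hb, hbe⟩ := hr
    have heq : D r = Phi Y hY u (centroid cls (x r)) := by
      rw [hDdef]
      dsimp only
      rw [hbe]
      exact D_eq_Phi hpi hY (hxD r hr0) hb
    exact ⟨heq, heq ▸ Phi_nonneg (centroid_mem_Delta hpi (hxD r hr0))⟩
  -- basic integral formula between two times
  have hseg : ∀ s t : ℝ, 0 ≤ s → s ≤ t → h t = h s + ∫ r in Set.Ioc s t, D r := by
    intro s t hs hst
    rw [hPrim.2 t (hs.trans hst), hPrim.2 s hs]
    have hu : Set.Ioc (0:ℝ) t = Set.Ioc 0 s ∪ Set.Ioc s t :=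
      (Set.Ioc_union_Ioc_eq_Ioc hs hst).symm
    rw [hu, setIntegral_union (Set.Ioc_disjoint_Ioc_of_le le_rfl) measurableSet_Ioc (hPrim.1 s)
      ((hPrim.1 t).mono_set (Set.Ioc_subset_Ioc_left hs))]
    ring
  have haeIoc : ∀ s t : ℝ, 0 ≤ s → ∀ᵐ r ∂(volume.restrict (Set.Ioc s t)),
      D r = Phi Y hY u (centroid cls (x r)) ∧ 0 ≤ D r := by
    intro s t hs
    exact ae_restrict_of_ae_restrict_of_subset
      (fun r (hr : r ∈ Set.Ioc s t) => le_trans hs hr.1.le) hDae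
  -- monotonicity of h on [0,∞)
  have hmono : ∀ s t : ℝ, 0 ≤ s → s ≤ t → h s ≤ h t := by
    intro s t hs hst
    rw [hseg s t hs hst]
    have : 0 ≤ ∫ r in Set.Ioc s t, D r := by
      refine setIntegral_nonneg_of_ae_restrict ?_
      filter_upwards [haeIoc s t hs] with r hr
      exact hr.2
    linarith
  -- upper bound for h
  set B : ℝ := ∑ y : ι → A, |u y| with hBdef
  have hB : ∀ t : ℝ, 0 ≤ t → h t ≤ B :=
    fun t ht => (le_abs_self _).trans (abs_U_le (centroid_mem_Delta hpi (hxD t ht)))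
  -- Lipschitz bound for the trajectory
  have hLip : ∀ s t : ℝ, 0 ≤ s → s ≤ t → ‖x t - x s‖ ≤ t - s := by
    intro s t hs hst
    rw [sol_sub_eq hg hxint hs hst]
    have hbound : ∀ᵐ r ∂(volume.restrict (Set.Ioc s t)), ‖g r‖ ≤ 1 := by
      have hsub : ∀ r ∈ Set.Ioc s t, r ∈ Set.Ici (0:ℝ) :=
        fun r hr => le_trans hs hr.1.le
      filter_upwards [ae_restrict_of_ae_restrict_of_subset hsub hgFj,
        ae_restrict_mem measurableSet_Ioc] with r hr hrm
      obtain ⟨b, hb, hbe⟩ := hr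
      rw [hbe]
      exact norm_sub_le_one_of_mem_Delta (fun i => (hb i).1) (hxD r (le_trans hs hrm.1.le))
    calc ‖∫ r in Set.Ioc s t, g r‖ ≤ 1 * (volume (Set.Ioc s t)).toReal :=
        norm_setIntegral_le_of_norm_le_const_ae measure_Ioc_lt_top hbound
      _ = t - s := by
        rw [one_mul, Real.volume_Ioc, ENNReal.toReal_ofReal (by linarith)]
  have hxCont : ContinuousOn x (Set.Ici 0) := by
    have : LipschitzOnWith 1 x (Set.Ici 0) := by
      refine LipschitzOnWith.of_dist_le_mul fun a ha b hb => ?_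
      rcases le_total a b with hab | hab
      · rw [dist_eq_norm, dist_eq_norm, norm_sub_rev (a:ℝ) b]
        rw [Real.norm_eq_abs, abs_of_nonneg (by linarith)]
        rw [norm_sub_rev]
        simpa using hLip a b ha hab
      · rw [dist_eq_norm, dist_eq_norm]
        rw [Real.norm_eq_abs, abs_of_nonneg (by linarith)]
        simpa using hLip b a hb hab
    exact this.continuousOn
  -- the nested closures
  set K : ℕ → Set (ι → A → ℝ) := fun n => closure (x '' Set.Ici (n:ℝ)) with hKdef
  have hKD : ∀ n, K n ⊆ Delta Y := by
    intro n
    refine closure_minimal ?_ isClosed_Delta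
    rintro _ ⟨t, ht, rfl⟩
    exact hxD t (le_trans (Nat.cast_nonneg n) ht)
  have hKcl : ∀ n, IsClosed (K n) := fun n => isClosed_closure
  have hKcomp : ∀ n, IsCompact (K n) :=
    fun n => isCompact_Delta.of_isClosed_subset (hKcl n) (hKD n)
  have hKconn : ∀ n, IsConnected (K n) := by
    intro n
    refine IsConnected.closure ?_
    refine (isConnected_Ici (a := (n:ℝ))).image x (hxCont.mono ?_)
    exact Set.Ici_subset_Ici.2 (Nat.cast_nonneg n)
  have hKant : ∀ n, K (n + 1) ⊆ K n := by
    intro n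
    refine closure_mono (Set.image_mono (f := x) ?_)
    exact Set.Ici_subset_Ici.2 (by exact_mod_cast Nat.le_succ n)
  have hKne : ∀ n, (K n).Nonempty :=
    fun n => ⟨x n, subset_closure ⟨(n:ℝ), Set.self_mem_Ici, rfl⟩⟩
  -- identification of the ω-limit set
  have hω : omegaLimitSet x = ⋂ n, K n := by
    ext p
    constructor
    · rintro ⟨tk, htk, hconv⟩
      refine Set.mem_iInter.2 fun n => ?_
      refine mem_closure_of_tendsto hconv ?_
      filter_upwards [htk.eventually_ge_atTop (n:ℝ)] with k hk
      exact ⟨tk k, hk, rfl⟩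
    · intro hp
      have hsel : ∀ n : ℕ, ∃ tn : ℝ, (n:ℝ) ≤ tn ∧ dist (x tn) p < 1 / (n + 1) := by
        intro n
        have hpK := Set.mem_iInter.1 hp n
        rcases Metric.mem_closure_iff.1 hpK (1 / (n + 1)) (by positivity) with ⟨q, hq, hdist⟩
        rcases hq with ⟨tn, htn, rfl⟩
        exact ⟨tn, htn, by rwa [dist_comm] at hdist⟩
      choose tn htn hdtn using hsel
      refine ⟨tn, ?_, ?_⟩
      · exact tendsto_atTop_mono htn tendsto_natCast_atTop_atTop
      · rw [tendsto_iff_dist_tendsto_zero]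
        refine squeeze_zero (fun n => dist_nonneg) (fun n => (hdtn n).le)
          tendsto_one_div_add_atTop_nhds_zero_nat
  -- nonemptiness and connectedness
  have hωne : (omegaLimitSet x).Nonempty := by
    rw [hω]
    exact IsCompact.nonempty_iInter_of_sequence_nonempty_isCompact_isClosed
      K hKant hKne (hKcomp 0) hKcl
  have hωconn : IsConnected (omegaLimitSet x) := by
    refine ⟨hωne, ?_⟩
    rw [hω]
    exact isPreconnected_iInter_nested K hKcomp hKcl hKant
      (fun n => (hKconn n).isPreconnected) hKne
  have hωD : omegaLimitSet x ⊆ Delta Y := by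
    rw [hω]
    exact (Set.iInter_subset K 0).trans (hKD 0)
  -- limit of h
  set H : ℝ → ℝ := fun t => h (max t 0) with hHdef
  have hHmono : Monotone H :=
    fun a b hab => hmono (max a 0) (max b 0) (le_max_right a 0) (max_le_max hab le_rfl)
  have hHbdd : BddAbove (Set.range H) := by
    refine ⟨B, ?_⟩
    rintro _ ⟨t, rfl⟩
    exact hB (max t 0) (le_max_right t 0)
  have hHtend : Tendsto H atTop (𝓝 (⨆ t, H t)) := tendsto_atTop_ciSup hHmono hHbdd
  have hUc : Continuous (fun q : ι → A → ℝ => U u (centroid cls q)) :=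
    (continuous_U u).comp (continuous_centroid cls)
  have hVlim : ∀ p ∈ omegaLimitSet x, U u (centroid cls p) = ⨆ t, H t := by
    rintro p ⟨tk, htk, hconv⟩
    have T1 : Tendsto (fun k => H (tk k)) atTop (𝓝 (⨆ t, H t)) := hHtend.comp htk
    have hEv : ∀ᶠ k in atTop, H (tk k) = U u (centroid cls (x (tk k))) := by
      filter_upwards [htk.eventually_ge_atTop 0] with k hk
      rw [hHdef]
      dsimp only
      rw [max_eq_left hk]
    have T1' : Tendsto (fun k => U u (centroid cls (x (tk k)))) atTop (𝓝 (⨆ t, H t)) :=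
      T1.congr' hEv
    have T2 : Tendsto (fun k => U u (centroid cls (x (tk k)))) atTop
        (𝓝 (U u (centroid cls p))) := (hUc.tendsto p).comp hconv
    exact tendsto_nhds_unique T2 T1'
  have hVeq : ∀ p ∈ omegaLimitSet x, Vfun u cls p = U u (centroid cls p) := by
    intro p hp
    have hn : ((Fintype.card ι : ℝ)) ≠ 0 := by
      exact_mod_cast Fintype.card_pos.ne'
    rw [Vfun, sum_U_update_centroid hpi (hωD hp), inv_mul_cancel_left₀ hn]
  -- membership in MCE
  have hMCE : omegaLimitSet x ⊆ MCE Y u cls := by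
    intro p hp
    have hpD : p ∈ Delta Y := hωD hp
    refine mem_MCE_of_Phi_eq_zero hpi hY hpD ?_
    by_contra hne0
    have hPhipos : 0 < Phi Y hY u (centroid cls p) :=
      lt_of_le_of_ne (Phi_nonneg (centroid_mem_Delta hpi hpD)) (Ne.symm hne0)
    set δ := Phi Y hY u (centroid cls p) with hδdef
    have hn : (0:ℝ) < (Fintype.card ι : ℝ) := by exact_mod_cast Fintype.card_pos
    -- a single profitable deviation
    have hex : ∃ i : ι, δ / (Fintype.card ι : ℝ)
        ≤ Mi Y hY u (centroid cls p) i - U u (centroid cls p) := by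
      by_contra hno
      push_neg at hno
      have hlt : Phi Y hY u (centroid cls p)
          < ∑ _i : ι, δ / (Fintype.card ι : ℝ) := by
        refine Finset.sum_lt_sum_of_nonempty Finset.univ_nonempty fun i _ => hno i
      rw [Finset.sum_const, nsmul_eq_mul, Finset.card_univ,
        mul_div_cancel₀ _ hn.ne'] at hlt
      exact lt_irrefl _ hlt
    obtain ⟨i, hi⟩ := hex
    obtain ⟨a, ha, hMa⟩ := Finset.exists_mem_eq_sup' (hY i)
      (fun a => U u (Function.update (centroid cls p) i (Pi.single a (1:ℝ))))
    set G : (ι → A → ℝ) → ℝ := fun z =>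
      U u (Function.update (centroid cls z) i (Pi.single a 1)) - U u (centroid cls z)
      with hGdef
    have hGcont : Continuous G := by
      refine Continuous.sub ?_ ?_
      · exact (continuous_U u).comp ((continuous_update_const i _).comp
          (continuous_centroid cls))
      · exact (continuous_U u).comp (continuous_centroid cls)
    have hGp : δ / (Fintype.card ι : ℝ) ≤ G p := by
      rw [Mi, hMa] at hi
      exact hi
    set ε' := δ / (2 * (Fintype.card ι : ℝ)) with hε'def
    have hε' : 0 < ε' := by
      rw [hε'def]
      positivity
    have hε'G : ε' < G p := by
      have h2 : ε' < δ / (Fintype.card ι : ℝ) := by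
        rw [hε'def, div_lt_div_iff₀ (by positivity) hn]
        nlinarith [hPhipos, hn]
      exact lt_of_lt_of_le h2 hGp
    have hnb : {w : ℝ | ε' < w} ∈ 𝓝 (G p) := Ioi_mem_nhds hε'G
    have hGev : ∀ᶠ z in 𝓝 p, ε' < G z := hGcont.continuousAt hnb
    obtain ⟨ρ, hρ, hρG⟩ := Metric.eventually_nhds_iff.1 hGev
    set τ := ρ / 2 with hτdef
    have hτ : 0 < τ := by positivity
    -- the window estimate
    have hwin : ∀ s : ℝ, 0 ≤ s → dist (x s) p < ρ / 2 → h s + ε' * τ ≤ h (s + τ) := by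
      intro s hs hds
      have hpt : ∀ r ∈ Set.Ioc s (s + τ), ε' ≤ Phi Y hY u (centroid cls (x r)) := by
        intro r hr
        have hr0 : (0:ℝ) ≤ r := le_trans hs hr.1.le
        have hdist : dist (x r) p < ρ := by
          calc dist (x r) p ≤ dist (x r) (x s) + dist (x s) p := dist_triangle _ _ _
            _ < (r - s) + ρ / 2 := by
                have h1 : dist (x r) (x s) ≤ r - s := by
                  rw [dist_eq_norm]
                  exact hLip s r hs hr.1.le
                linarith
            _ ≤ τ + ρ / 2 := by
                have := hr.2
                linarith
            _ = ρ := by rw [hτdef]; ring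
        have hGxr : ε' < G (x r) := hρG hdist
        have hle : G (x r) ≤ Phi Y hY u (centroid cls (x r)) :=
          single_le_Phi (centroid_mem_Delta hpi (hxD r hr0)) ha
        linarith
      have hco : ε' * τ ≤ ∫ r in Set.Ioc s (s + τ), D r := by
        have hDI : IntegrableOn D (Set.Ioc s (s + τ)) :=
          (hPrim.1 (s + τ)).mono_set (Set.Ioc_subset_Ioc_left hs)
        have hCI : IntegrableOn (fun _ : ℝ => ε') (Set.Ioc s (s + τ)) :=
          integrableOn_const measure_Ioc_lt_top.ne
        have hle : (fun _ : ℝ => ε') ≤ᵐ[volume.restrict (Set.Ioc s (s + τ))] D := by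
          filter_upwards [haeIoc s (s + τ) hs, ae_restrict_mem measurableSet_Ioc]
            with r hr hrm
          rw [hr.1]
          exact hpt r hrm
        have := integral_mono_ae hCI hDI hle
        rw [setIntegral_const, Measure.real, Real.volume_Ioc, smul_eq_mul,
          ENNReal.toReal_ofReal (by linarith)] at this
        calc ε' * τ = (s + τ - s) * ε' := by ring
          _ ≤ ∫ r in Set.Ioc s (s + τ), D r := this
      rw [hseg s (s + τ) hs (by linarith)]
      linarith
    -- extraction of infinitely many separated windows
    obtain ⟨tk, htk, hconv⟩ := hp
    have hfreq : ∀ c : ℝ, ∃ s : ℝ, c ≤ s ∧ 0 ≤ s ∧ dist (x s) p < ρ / 2 := by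
      intro c
      have h1 : ∀ᶠ k in atTop, c ≤ tk k ∧ 0 ≤ tk k ∧ dist (x (tk k)) p < ρ / 2 := by
        filter_upwards [htk.eventually_ge_atTop c, htk.eventually_ge_atTop 0,
          hconv.eventually (Metric.ball_mem_nhds p (half_pos hρ))] with k h1 h2 h3
        exact ⟨h1, h2, Metric.mem_ball.1 h3⟩
      obtain ⟨k, hk⟩ := h1.exists
      exact ⟨tk k, hk⟩
    choose sel hsel1 hsel2 hsel3 using hfreq
    set sq : ℕ → ℝ := fun m => Nat.rec (sel 0) (fun _ prev => sel (prev + τ)) m with hsq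
    have hsq0 : ∀ m, 0 ≤ sq m := by
      intro m
      cases m with
      | zero => exact hsel2 0
      | succ m => exact hsel2 _
    have hsqd : ∀ m, dist (x (sq m)) p < ρ / 2 := by
      intro m
      cases m with
      | zero => exact hsel3 0
      | succ m => exact hsel3 _
    have hsqstep : ∀ m, sq m + τ ≤ sq (m + 1) := fun m => hsel1 (sq m + τ)
    have hgrow : ∀ m : ℕ, h (sq 0) + m * (ε' * τ) ≤ h (sq m) := by
      intro m
      induction m with
      | zero => simp
      | succ m ih =>
        have h1 : h (sq m) + ε' * τ ≤ h (sq m + τ) := hwin (sq m) (hsq0 m) (hsqd m)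
        have h2 : h (sq m + τ) ≤ h (sq (m + 1)) :=
          hmono (sq m + τ) (sq (m + 1)) (by linarith [hsq0 m]) (hsqstep m)
        push_cast
        linarith
    obtain ⟨m, hm⟩ := exists_nat_gt ((B - h (sq 0)) / (ε' * τ))
    have hmB : B < h (sq 0) + m * (ε' * τ) := by
      have h1 : (B - h (sq 0)) / (ε' * τ) * (ε' * τ) < m * (ε' * τ) :=
        mul_lt_mul_of_pos_right hm (by positivity)
      rw [div_mul_cancel₀ _ (by positivity : ε' * τ ≠ 0)] at h1
      linarith
    have := hgrow m
    have := hB (sq m) (hsq0 m)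
    linarith
  refine ⟨hωconn, hMCE, ?_⟩
  intro p hp p' hp'
  rw [hVeq p hp, hVeq p' hp', hVlim p hp, hVlim p' hp']

end ECFP
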